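/- Let d ≥ 1 and C ≥ 1. Let w : Fin C → EuclideanSpace ℝ (Fin d) and b : Fin C → ℝ define logits g(z) c = ⟪w c, z⟫ + b c. Fix z₀ ∈ EuclideanSpace ℝ (Fin d), a real λ ≥ 0, and a positive semidefinite matrix Σ : Matrix (Fin d) (Fin d) ℝ. Then for every class c : Fin C, the function x ↦ −log (softmax(g(x)) c) is integrable with respect to N(z₀, λ • Σ) and ∫ (−log (softmax(g(x)) c)) dN(z₀, λ • Σ)(x) ≤ log (∑_{c'} exp ((g(z₀) c' − g(z₀) c) + (λ/2) * (w c' − w c)ᵀ Σ (w c' − w c))). -/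

import Mathlib

open MeasureTheory ProbabilityTheory Real
open scoped RealInnerProductSpace BigOperators ENNReal
open scoped NNReal

/-- The positive semidefinite square root of a positive semidefinite matrix (no longer in Mathlib;
restored with its old definition, specialised to real matrices). -/
noncomputable def Matrix.PosSemidef.sqrt {n : Type*} [Fintype n] [DecidableEq n]
    {A : Matrix n n ℝ} (hA : A.PosSemidef) : Matrix n n ℝ :=
  hA.1.eigenvectorUnitary.1 * Matrix.diagonal ((↑) ∘ (√·) ∘ hA.1.eigenvalues) *
    (star hA.1.eigenvectorUnitary : Matrix n n ℝ)

/-- The multivariate Gaussian measure `N(μ, S)` on `EuclideanSpace ℝ (Fin d)` with mean `μ` and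
positive semidefinite covariance matrix `S`, realized as the pushforward of the standard
Gaussian under the affine map `x ↦ μ + √S x`. -/
noncomputable def multiGaussian {d : ℕ} (μ : EuclideanSpace ℝ (Fin d))
    (S : Matrix (Fin d) (Fin d) ℝ) (hS : S.PosSemidef) :
    Measure (EuclideanSpace ℝ (Fin d)) :=
  (MeasureTheory.Measure.pi fun _ : Fin d => gaussianReal 0 1).map
    (fun x => μ + (EuclideanSpace.equiv (Fin d) ℝ).symm (hS.sqrt.mulVec x))

/-- The quadratic form `aᵀ S a = ∑ p q, a p * S p q * a q`. -/
def quadForm {d : ℕ} (S : Matrix (Fin d) (Fin d) ℝ) (a : EuclideanSpace ℝ (Fin d)) : ℝ :=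
  ∑ p, ∑ q, a p * S p q * a q

/-- Softmax of a vector of logits. -/
noncomputable def softmax {C : ℕ} (v : Fin C → ℝ) (c : Fin C) : ℝ :=
  Real.exp (v c) / ∑ c', Real.exp (v c')

/-- A nonnegative scalar multiple of a positive semidefinite matrix is positive semidefinite. -/
theorem posSemidef_smul {d : ℕ} {S : Matrix (Fin d) (Fin d) ℝ} (hS : S.PosSemidef)
    {c : ℝ} (hc : 0 ≤ c) : (c • S).PosSemidef := by
  refine ⟨?_, fun x => ?_⟩
  · unfold Matrix.IsHermitian
    rw [Matrix.conjTranspose_smul, hS.1]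
    simp
  · have h := mul_nonneg hc (hS.2 x)
    simp only [Finsupp.sum, Finset.mul_sum] at h
    refine le_of_le_of_eq h (Finset.sum_congr rfl fun _ _ => Finset.sum_congr rfl fun _ _ => ?_)
    simp only [Matrix.smul_apply, smul_eq_mul]
    ring



lemma gaussian_mgf (t : ℝ) :
    Integrable (fun x => Real.exp (t * x)) (gaussianReal 0 1) ∧
    ∫ x, Real.exp (t * x) ∂(gaussianReal 0 1) = Real.exp (t ^ 2 / 2) := by
  have hrw : gaussianReal 0 1
      = volume.withDensity (fun x => ((gaussianPDFReal 0 1 x).toNNReal : ℝ≥0∞)) := by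
    rw [gaussianReal_of_var_ne_zero 0 one_ne_zero]
    rfl
  have hmeas : Measurable fun x => (gaussianPDFReal 0 1 x).toNNReal :=
    (measurable_gaussianPDFReal 0 1).real_toNNReal
  have hpt : ∀ x, gaussianPDFReal 0 1 x * Real.exp (t * x)
      = Real.exp (t ^ 2 / 2) * gaussianPDFReal t 1 x := by
    intro x
    unfold gaussianPDFReal
    push_cast
    have h2 : -(x - 0) ^ 2 / (2 * 1) + t * x = t ^ 2 / 2 + -(x - t) ^ 2 / (2 * 1) := by ring
    rw [mul_assoc, ← Real.exp_add, h2, Real.exp_add]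
    ring
  have hsmul : ∀ x, ((gaussianPDFReal 0 1 x).toNNReal : ℝ≥0) • Real.exp (t * x)
      = Real.exp (t ^ 2 / 2) * gaussianPDFReal t 1 x := by
    intro x
    rw [NNReal.smul_def, Real.coe_toNNReal _ (gaussianPDFReal_nonneg 0 1 x),
      smul_eq_mul, hpt]
  have hint : Integrable (fun x => Real.exp (t ^ 2 / 2) * gaussianPDFReal t 1 x) :=
    (integrable_gaussianPDFReal t 1).const_mul (Real.exp (t ^ 2 / 2))
  constructor
  · rw [hrw, integrable_withDensity_iff_integrable_smul hmeas]
    exact hint.congr (ae_of_all _ fun x => (hsmul x).symm)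
  · rw [hrw, integral_withDensity_eq_integral_smul hmeas]
    calc ∫ x, ((gaussianPDFReal 0 1 x).toNNReal : ℝ≥0) • Real.exp (t * x)
        = ∫ x, Real.exp (t ^ 2 / 2) * gaussianPDFReal t 1 x :=
          integral_congr_ae (ae_of_all _ hsmul)
      _ = Real.exp (t ^ 2 / 2) * ∫ x, gaussianPDFReal t 1 x := integral_const_mul _ _
      _ = Real.exp (t ^ 2 / 2) := by
          rw [integral_gaussianPDFReal_eq_one t one_ne_zero, mul_one]

lemma gaussian_pi_mgf {d : ℕ} (t : Fin d → ℝ) :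
    Integrable (fun x : Fin d → ℝ => Real.exp (∑ i, t i * x i))
      (Measure.pi fun _ => gaussianReal 0 1) ∧
    ∫ x, Real.exp (∑ i, t i * x i) ∂(Measure.pi fun _ => gaussianReal 0 1)
      = Real.exp (∑ i, t i ^ 2 / 2) := by
  letI : MeasureSpace ℝ := ⟨gaussianReal 0 1⟩
  haveI : SigmaFinite (volume : Measure ℝ) := by
    show SigmaFinite (gaussianReal 0 1); infer_instance
  have hexp : (fun x : Fin d → ℝ => Real.exp (∑ i, t i * x i))
      = fun x => ∏ i, Real.exp (t i * x i) := by
    funext x; exact Real.exp_sum _ _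
  constructor
  · rw [hexp]
    exact Integrable.fintype_prod (fun i => (gaussian_mgf (t i)).1)
  · rw [hexp]
    show ∫ x : Fin d → ℝ, ∏ i, Real.exp (t i * x i) = _
    rw [volume_pi, integral_fintype_prod_eq_prod (fun i x => Real.exp (t i * x))]
    rw [Real.exp_sum]
    exact Finset.prod_congr rfl fun i _ => (gaussian_mgf (t i)).2

lemma Matrix.PosSemidef.sqrt_isHermitian {d : ℕ} {S : Matrix (Fin d) (Fin d) ℝ}
    (hS : S.PosSemidef) : hS.sqrt.IsHermitian := by
  unfold Matrix.IsHermitian Matrix.PosSemidef.sqrt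
  simp [Matrix.conjTranspose_mul, Matrix.mul_assoc, Matrix.star_eq_conjTranspose,
    Matrix.conjTranspose_eq_transpose_of_trivial]

lemma Matrix.PosSemidef.sqrt_mul_self' {d : ℕ} {S : Matrix (Fin d) (Fin d) ℝ}
    (hS : S.PosSemidef) : hS.sqrt * hS.sqrt = S := by
  have hU : (star hS.1.eigenvectorUnitary : Matrix (Fin d) (Fin d) ℝ) *
      hS.1.eigenvectorUnitary = 1 := Unitary.coe_star_mul_self _
  conv_rhs => rw [hS.1.spectral_theorem]
  unfold Matrix.PosSemidef.sqrt
  rw [Unitary.conjStarAlgAut_apply]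
  simp only [Matrix.mul_assoc]
  rw [← Matrix.mul_assoc (star _ : Matrix (Fin d) (Fin d) ℝ), hU, Matrix.one_mul,
    ← Matrix.mul_assoc (Matrix.diagonal _), Matrix.diagonal_mul_diagonal]
  congr 3
  funext i
  simp [Real.mul_self_sqrt (hS.eigenvalues_nonneg i)]

lemma map_exp_inner {d : ℕ} (S : Matrix (Fin d) (Fin d) ℝ) (hS : S.PosSemidef)
    (z₀ a : EuclideanSpace ℝ (Fin d)) (β : ℝ) :
    Integrable (fun z => Real.exp (⟪a, z⟫ + β)) (multiGaussian z₀ S hS) ∧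
    ∫ z, Real.exp (⟪a, z⟫ + β) ∂(multiGaussian z₀ S hS)
      = Real.exp ((⟪a, z₀⟫ + β) + quadForm S a / 2) := by
  set R := hS.sqrt with hRdef
  set t : Fin d → ℝ := fun j => ∑ i, a i * R i j with ht
  set T : (Fin d → ℝ) → EuclideanSpace ℝ (Fin d) :=
    fun x => z₀ + (EuclideanSpace.equiv (Fin d) ℝ).symm (R.mulVec x) with hT
  have hTmeas : Measurable T := by
    have h1 : Continuous fun x : Fin d → ℝ => R.mulVec x :=
      LinearMap.continuous_of_finiteDimensional (Matrix.mulVecLin R)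
    exact (((EuclideanSpace.equiv (Fin d) ℝ).symm.continuous.comp h1).measurable).const_add z₀
  have hμ : multiGaussian z₀ S hS = (Measure.pi fun _ : Fin d => gaussianReal 0 1).map T := rfl
  have hcomp : ∀ x : Fin d → ℝ, ⟪a, T x⟫ + β = (⟪a, z₀⟫ + β) + ∑ j, t j * x j := by
    intro x
    rw [hT]
    simp only [inner_add_right]
    have hkey : ⟪a, (EuclideanSpace.equiv (Fin d) ℝ).symm (R.mulVec x)⟫ = ∑ j, t j * x j := by
      rw [PiLp.inner_apply]
      simp only [RCLike.inner_apply, conj_trivial]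
      have happ : ∀ i, ((EuclideanSpace.equiv (Fin d) ℝ).symm (R.mulVec x)) i
          = ∑ j, R i j * x j := fun i => rfl
      rw [Finset.sum_congr rfl fun i _ =>
        mul_comm (((EuclideanSpace.equiv (Fin d) ℝ).symm (R.mulVec x)) i) (a i)]
      calc ∑ i, a i * ((EuclideanSpace.equiv (Fin d) ℝ).symm (R.mulVec x)) i
          = ∑ i, ∑ j, a i * (R i j * x j) := by
            refine Finset.sum_congr rfl fun i _ => ?_
            rw [happ, Finset.mul_sum]
        _ = ∑ j, ∑ i, a i * (R i j * x j) := Finset.sum_comm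
        _ = ∑ j, t j * x j := by
            refine Finset.sum_congr rfl fun j _ => ?_
            rw [ht, Finset.sum_mul]
            exact Finset.sum_congr rfl fun i _ => by ring
    rw [hkey]; ring
  have hsym : ∀ p j, R p j = R j p := by
    intro p j
    have h := hS.sqrt_isHermitian
    have := congrFun (congrFun h p) j
    rw [Matrix.conjTranspose_apply] at this
    simpa using this.symm
  have hRR : ∀ p q, ∑ j, R p j * R q j = S p q := by
    intro p q
    calc ∑ j, R p j * R q j = ∑ j, R p j * R j q := by
          exact Finset.sum_congr rfl fun j _ => by rw [hsym q j]
      _ = (R * R) p q := (Matrix.mul_apply).symm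
      _ = S p q := by rw [hRdef, hS.sqrt_mul_self']
  have hq : ∑ j, t j ^ 2 = quadForm S a := by
    calc ∑ j, t j ^ 2 = ∑ j, ∑ p, ∑ q, (a p * R p j) * (a q * R q j) := by
          refine Finset.sum_congr rfl fun j _ => ?_
          rw [ht, pow_two, Finset.sum_mul_sum]
      _ = ∑ p, ∑ j, ∑ q, (a p * R p j) * (a q * R q j) := Finset.sum_comm
      _ = ∑ p, ∑ q, ∑ j, (a p * R p j) * (a q * R q j) :=
          Finset.sum_congr rfl fun p _ => Finset.sum_comm
      _ = ∑ p, ∑ q, a p * S p q * a q := by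
          refine Finset.sum_congr rfl fun p _ => Finset.sum_congr rfl fun q _ => ?_
          rw [← hRR p q, Finset.mul_sum, Finset.sum_mul]
          exact Finset.sum_congr rfl fun j _ => by ring
      _ = quadForm S a := rfl
  have hquad : ∑ j, t j ^ 2 / 2 = quadForm S a / 2 := by
    rw [← Finset.sum_div, hq]
  have hmgf := gaussian_pi_mgf t
  have hptw : ∀ x : Fin d → ℝ, Real.exp (⟪a, T x⟫ + β)
      = Real.exp (⟪a, z₀⟫ + β) * Real.exp (∑ j, t j * x j) := by
    intro x; rw [hcomp, Real.exp_add]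
  have hint_comp : Integrable (fun x => Real.exp (⟪a, T x⟫ + β))
      (Measure.pi fun _ : Fin d => gaussianReal 0 1) := by
    have heq : (fun x : Fin d → ℝ => Real.exp (⟪a, T x⟫ + β))
        = fun x => Real.exp (⟪a, z₀⟫ + β) * Real.exp (∑ j, t j * x j) := funext hptw
    rw [heq]; exact hmgf.1.const_mul _
  have hmeasf : AEStronglyMeasurable (fun z : EuclideanSpace ℝ (Fin d) => Real.exp (⟪a, z⟫ + β))
      ((Measure.pi fun _ : Fin d => gaussianReal 0 1).map T) := by
    apply Continuous.aestronglyMeasurable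
    exact Real.continuous_exp.comp ((continuous_const.inner continuous_id).add continuous_const)
  constructor
  · rw [hμ]
    exact (integrable_map_measure hmeasf hTmeas.aemeasurable).2 hint_comp
  · rw [hμ, integral_map hTmeas.aemeasurable hmeasf]
    calc ∫ x, Real.exp (⟪a, T x⟫ + β) ∂(Measure.pi fun _ : Fin d => gaussianReal 0 1)
        = ∫ x, Real.exp (⟪a, z₀⟫ + β) * Real.exp (∑ j, t j * x j)
            ∂(Measure.pi fun _ : Fin d => gaussianReal 0 1) :=
          integral_congr_ae (ae_of_all _ hptw)
      _ = Real.exp (⟪a, z₀⟫ + β) * Real.exp (∑ j, t j ^ 2 / 2) := by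
          rw [integral_const_mul, hmgf.2]
      _ = Real.exp ((⟪a, z₀⟫ + β) + quadForm S a / 2) := by
          rw [hquad, ← Real.exp_add]

/-- Single-feature bound inside Proposition 1: the expected cross-entropy of the softmax over one
Gaussian-augmented feature is bounded by the ISDA-type closed form, and the integrand is
integrable. -/
theorem single_feature_bound (d C : ℕ) (hd : 1 ≤ d) (hC : 1 ≤ C)
    (w : Fin C → EuclideanSpace ℝ (Fin d)) (b : Fin C → ℝ)
    (g : EuclideanSpace ℝ (Fin d) → Fin C → ℝ)
    (hg : ∀ z c, g z c = ⟪w c, z⟫ + b c)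
    (z₀ : EuclideanSpace ℝ (Fin d)) (lam : ℝ) (hlam : 0 ≤ lam)
    (Sig : Matrix (Fin d) (Fin d) ℝ) (hSig : Sig.PosSemidef) (c : Fin C) :
    Integrable (fun x => -Real.log (softmax (g x) c))
      (multiGaussian z₀ (lam • Sig) (posSemidef_smul hSig hlam)) ∧
    ∫ x, -Real.log (softmax (g x) c)
        ∂(multiGaussian z₀ (lam • Sig) (posSemidef_smul hSig hlam))
      ≤ Real.log (∑ c', Real.exp ((g z₀ c' - g z₀ c)
          + lam / 2 * quadForm Sig (w c' - w c))) := by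
  haveI : Nonempty (Fin C) := ⟨⟨0, hC⟩⟩
  set μ := multiGaussian z₀ (lam • Sig) (posSemidef_smul hSig hlam) with hμdef
  haveI : IsProbabilityMeasure μ := by
    rw [hμdef]
    unfold multiGaussian
    have h1 : Continuous fun x : Fin d → ℝ => (posSemidef_smul hSig hlam).sqrt.mulVec x :=
      LinearMap.continuous_of_finiteDimensional (Matrix.mulVecLin (posSemidef_smul hSig hlam).sqrt)
    have hTmeas : Measurable fun x : Fin d → ℝ =>
        z₀ + (EuclideanSpace.equiv (Fin d) ℝ).symm ((posSemidef_smul hSig hlam).sqrt.mulVec x) :=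
      (((EuclideanSpace.equiv (Fin d) ℝ).symm.continuous.comp h1).measurable).const_add z₀
    exact Measure.isProbabilityMeasure_map hTmeas.aemeasurable
  set F : EuclideanSpace ℝ (Fin d) → ℝ :=
    fun z => ∑ c', Real.exp (⟪w c' - w c, z⟫ + (b c' - b c)) with hF
  have hgF : ∀ z c', ⟪w c' - w c, z⟫ + (b c' - b c) = g z c' - g z c := by
    intro z c'; rw [hg, hg, inner_sub_left]; ring
  have hFpos : ∀ z, 0 < F z :=
    fun z => Finset.sum_pos (fun c' _ => Real.exp_pos _) ⟨c, Finset.mem_univ c⟩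
  have h1F : ∀ z, 1 ≤ F z := by
    intro z
    have h := Finset.single_le_sum (f := fun c' => Real.exp (⟪w c' - w c, z⟫ + (b c' - b c)))
      (fun i _ => (Real.exp_pos _).le) (Finset.mem_univ c)
    simpa [sub_self, inner_zero_left] using h
  have hsum : ∀ z, 0 < ∑ c', Real.exp (g z c') :=
    fun z => Finset.sum_pos (fun c' _ => Real.exp_pos _) ⟨c, Finset.mem_univ c⟩
  have hlog : ∀ z, -Real.log (softmax (g z) c) = Real.log (F z) := by
    intro z
    have hFdiv : F z = (∑ c', Real.exp (g z c')) / Real.exp (g z c) := by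
      rw [hF, Finset.sum_div]
      refine Finset.sum_congr rfl fun c' _ => ?_
      rw [← Real.exp_sub, hgF]
    rw [softmax, Real.log_div (Real.exp_ne_zero _) (hsum z).ne', Real.log_exp, hFdiv,
      Real.log_div (hsum z).ne' (Real.exp_ne_zero _), Real.log_exp, neg_sub]
  have hfunext : (fun x => -Real.log (softmax (g x) c)) = fun z => Real.log (F z) :=
    funext hlog
  have hterm := fun c' =>
    map_exp_inner (lam • Sig) (posSemidef_smul hSig hlam) z₀ (w c' - w c) (b c' - b c)
  have hFint : Integrable F μ := by
    rw [hF]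
    exact integrable_finset_sum _ fun c' _ => (hterm c').1
  set m := ∑ c', Real.exp ((g z₀ c' - g z₀ c) + lam / 2 * quadForm Sig (w c' - w c)) with hm
  have hmpos : 0 < m :=
    Finset.sum_pos (fun c' _ => Real.exp_pos _) ⟨c, Finset.mem_univ c⟩
  have hquadS : ∀ a, quadForm (lam • Sig) a / 2 = lam / 2 * quadForm Sig a := by
    intro a
    have h : quadForm (lam • Sig) a = lam * quadForm Sig a := by
      unfold quadForm
      rw [Finset.mul_sum]
      refine Finset.sum_congr rfl fun p _ => ?_
      rw [Finset.mul_sum]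
      refine Finset.sum_congr rfl fun q _ => ?_
      rw [Matrix.smul_apply, smul_eq_mul]; ring
    rw [h]; ring
  have hintF : ∫ z, F z ∂μ = m := by
    rw [hF, integral_finset_sum _ fun c' _ => (hterm c').1, hm]
    refine Finset.sum_congr rfl fun c' _ => ?_
    rw [(hterm c').2, hgF z₀ c', hquadS]
  have hFcont : Continuous F := continuous_finset_sum _ fun c' _ =>
    (Real.continuous_exp.comp ((continuous_const.inner continuous_id).add continuous_const))
  have hlogcont : Continuous fun z => Real.log (F z) :=
    continuous_iff_continuousAt.2 fun z =>
      (Real.continuousAt_log (hFpos z).ne').comp hFcont.continuousAt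
  have hlogint : Integrable (fun z => Real.log (F z)) μ := by
    refine hFint.mono' hlogcont.aestronglyMeasurable (ae_of_all _ fun z => ?_)
    rw [Real.norm_eq_abs, abs_of_nonneg (Real.log_nonneg (h1F z))]
    have := Real.log_le_sub_one_of_pos (hFpos z)
    linarith
  constructor
  · rw [hfunext]; exact hlogint
  · rw [hfunext]
    have hle : ∀ z, Real.log (F z) ≤ Real.log m + (F z / m - 1) := by
      intro z
      have h := Real.log_le_sub_one_of_pos (div_pos (hFpos z) hmpos)
      rw [Real.log_div (hFpos z).ne' hmpos.ne'] at h
      linarith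
    have hint1 : Integrable (fun z => F z / m) μ := hFint.div_const m
    have hint2 : Integrable (fun z : EuclideanSpace ℝ (Fin d) => F z / m - 1) μ :=
      hint1.sub (integrable_const 1)
    have hrhsint : Integrable (fun z => Real.log m + (F z / m - 1)) μ :=
      (integrable_const _).add hint2
    have hint_le : ∫ z, Real.log (F z) ∂μ ≤ ∫ z, (Real.log m + (F z / m - 1)) ∂μ :=
      integral_mono hlogint hrhsint hle
    have hrhs : ∫ z, (Real.log m + (F z / m - 1)) ∂μ = Real.log m := by
      rw [integral_add (integrable_const _) hint2, integral_const,
        integral_sub hint1 (integrable_const 1), integral_div, hintF, integral_const]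
      simp [div_self hmpos.ne']
    rw [hrhs] at hint_le
    exact hint_le
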